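/- Define p_h(k,l) = C(n+1, h+1) − Σ_{j≥0} C(k+1, k+j+1)·C(n−k, h−l−j), where C(n,k) is the binomial coefficient extended to all integers via (1+x)^n = Σ_k C(n,k) x^k (so C(n,k) = 0 for k < 0 or k > n when n ≥ 0). Then p_h(k,l) ≥ 0 for all integers 0 ≤ l ≤ k ≤ n and 0 ≤ h ≤ n. -/
import Mathlib


/-- The binomial coefficient `C(n,k)` extended to all integers via
`(1+x)^n = Σ_k C(n,k) x^k`: it vanishes for `k < 0`; for `n ≥ 0` it is the usual
binomial coefficient (vanishing for `k > n`); for `n < 0` it is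
`(-1)^k C(k−n−1, k)`. -/
def genBinom (n k : ℤ) : ℤ :=
  if k < 0 then 0
  else if 0 ≤ n then (n.toNat.choose k.toNat : ℤ)
  else (-1) ^ k.toNat * ((k - n - 1).toNat.choose k.toNat : ℤ)

/-- Ahlfors' combinatorial coefficients
`p_h(k,l) = C(n+1,h+1) − Σ_{j≥0} C(k+1, k+j+1)·C(n−k, h−l−j)`. -/
noncomputable def ahlforsP (n h k l : ℤ) : ℤ :=
  genBinom (n + 1) (h + 1) -
    ∑ᶠ j : ℕ, genBinom (k + 1) (k + (j : ℤ) + 1) * genBinom (n - k) (h - l - (j : ℤ))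

lemma choose_add_le_aux (a b m : ℕ) : a.choose b ≤ (a + m).choose (b + m) := by
  induction m with
  | zero => simp
  | succ m ih =>
    have h : (a + m + 1).choose (b + m + 1)
        = (a + m).choose (b + m) + (a + m).choose (b + m + 1) :=
      Nat.choose_succ_succ _ _
    have e1 : a + (m + 1) = a + m + 1 := by omega
    have e2 : b + (m + 1) = b + m + 1 := by omega
    rw [e1, e2, h]
    omega

/-- **Non-negativity of Ahlfors' coefficients:** `p_h(k,l) ≥ 0` for all integers
`0 ≤ l ≤ k ≤ n` and `0 ≤ h ≤ n`. -/
theorem ahlforsP_nonneg (n h k l : ℤ) (hl : 0 ≤ l) (hlk : l ≤ k) (hkn : k ≤ n)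
    (hh : 0 ≤ h) (hhn : h ≤ n) : 0 ≤ ahlforsP n h k l := by
  have hsum : (∑ᶠ j : ℕ, genBinom (k + 1) (k + (j : ℤ) + 1)
      * genBinom (n - k) (h - l - (j : ℤ))) = genBinom (n - k) (h - l) := by
    rw [finsum_eq_single _ 0 ?_]
    · have h1 : genBinom (k + 1) (k + (0 : ℕ) + 1) = 1 := by
        unfold genBinom
        rw [if_neg (by omega), if_pos (by omega)]
        norm_num
      rw [h1, one_mul]
      norm_num
    · intro j hj
      have hj1 : 1 ≤ (j : ℤ) := by exact_mod_cast Nat.one_le_iff_ne_zero.mpr hj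
      have h0 : genBinom (k + 1) (k + (j : ℤ) + 1) = 0 := by
        unfold genBinom
        rw [if_neg (by omega), if_pos (by omega)]
        have : (k + 1).toNat < (k + (j : ℤ) + 1).toNat := by omega
        rw [Nat.choose_eq_zero_of_lt this]
        simp
      rw [h0, zero_mul]
  unfold ahlforsP
  rw [hsum]
  have htop : genBinom (n + 1) (h + 1) = ((n + 1).toNat.choose (h + 1).toNat : ℤ) := by
    unfold genBinom
    rw [if_neg (by omega), if_pos (by omega)]
  by_cases hhl : h - l < 0
  · have : genBinom (n - k) (h - l) = 0 := by
      unfold genBinom; rw [if_pos hhl]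
    rw [this, htop]
    omega
  · have hb : genBinom (n - k) (h - l) = ((n - k).toNat.choose (h - l).toNat : ℤ) := by
      unfold genBinom
      rw [if_neg hhl, if_pos (by omega)]
    rw [hb, htop]
    have key : (n - k).toNat.choose (h - l).toNat ≤ (n + 1).toNat.choose (h + 1).toNat := by
      have e1 : (n + 1).toNat = (n - k).toNat + (l + 1).toNat + (k - l).toNat := by omega
      have e2 : (h + 1).toNat = (h - l).toNat + (l + 1).toNat := by omega
      rw [e1, e2]
      calc (n - k).toNat.choose (h - l).toNat
          ≤ ((n - k).toNat + (l + 1).toNat).choose ((h - l).toNat + (l + 1).toNat) :=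
            choose_add_le_aux _ _ _
        _ ≤ ((n - k).toNat + (l + 1).toNat + (k - l).toNat).choose
              ((h - l).toNat + (l + 1).toNat) :=
            Nat.choose_le_choose _ (Nat.le_add_right _ _)
    omega
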